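/- Let (sₖ)_{k≥1} be positive integers, m₀ = b, m₁ = b^{s₁-1}a, m_{k+1} = m_k^{s_{k+1}} m_{k-1}. For every k ≥ 1 and every t with 1 ≤ t ≤ s_{k+1}, the word (m_k^t m_{k-1})' (the word m_k^t m_{k-1} with its last two letters removed) is a palindrome. -/

import Mathlib

/-- `w.drop2` is the word `w` deprived of its last two letters. -/
def drop2 {A : Type*} (w : List A) : List A := w.dropLast.dropLast

/-- `wordPow w t` is the `t`-fold concatenation `w^t`. -/
def wordPow {A : Type*} (w : List A) (t : ℕ) : List A := (List.replicate t w).flatten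

lemma wordPow_succ {A : Type*} (w : List A) (t : ℕ) :
    wordPow w (t + 1) = w ++ wordPow w t := by
  simp [wordPow, List.replicate_succ]

lemma wordPow_succ' {A : Type*} (w : List A) (t : ℕ) :
    wordPow w (t + 1) = wordPow w t ++ w := by
  simp [wordPow, List.replicate_succ']

lemma wordPow_comm {A : Type*} (w : List A) (t : ℕ) :
    w ++ wordPow w t = wordPow w t ++ w := by
  rw [← wordPow_succ, wordPow_succ']

lemma drop2_concat2 {A : Type*} (u : List A) (x y : A) :
    drop2 (u ++ [x, y]) = u := by
  have : u ++ [x, y] = (u ++ [x]) ++ [y] := by simp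
  rw [drop2, this, List.dropLast_concat, List.dropLast_concat]

lemma comm_wordPow {A : Type*} {r w : List A} (h : r ++ w.reverse = w ++ r) :
    ∀ t, r ++ (wordPow w t).reverse = wordPow w t ++ r := by
  intro t
  induction t with
  | zero => simp [wordPow]
  | succ n ih =>
    conv_lhs => rw [wordPow_succ]
    rw [List.reverse_append, ← List.append_assoc, ih, List.append_assoc, h,
      ← List.append_assoc, wordPow_succ']

/-- The key invariant. -/
lemma key_inv {A : Type*} (a b : A) (s : ℕ → ℕ)
    (m : ℕ → List A) (hm0 : m 0 = [b])
    (hm1 : m 1 = List.replicate (s 1 - 1) b ++ [a])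
    (hmr : ∀ k : ℕ, 1 ≤ k → m (k + 1) = wordPow (m k) (s (k + 1)) ++ m (k - 1)) :
    ∀ k : ℕ, 1 ≤ k → ∃ r : List A, ∃ x y : A,
      m k ++ m (k - 1) = r ++ [x, y] ∧
      m (k - 1) ++ m k = r ++ [y, x] ∧
      r.reverse = r ∧
      r ++ (m k).reverse = m k ++ r ∧
      r ++ (m (k - 1)).reverse = m (k - 1) ++ r := by
  intro k hk
  induction k, hk using Nat.le_induction with
  | base =>
    have hrep : b :: List.replicate (s 1 - 1) b = List.replicate (s 1 - 1) b ++ [b] := by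
      rw [← List.replicate_succ, List.replicate_succ']
    refine ⟨List.replicate (s 1 - 1) b, a, b, ?_, ?_, ?_, ?_, ?_⟩
    · simp [hm0, hm1]
    · rw [hm0, hm1, List.singleton_append, ← List.cons_append, hrep,
        List.append_assoc]
      rfl
    · exact List.reverse_replicate
    · rw [hm1]
      simp
    · rw [hm0, List.reverse_singleton, ← hrep]
      simp
  | succ k hk ih =>
    obtain ⟨r, x, y, h1, h2, h3, h4, h5⟩ := ih
    set W := wordPow (m k) (s (k + 1)) with hW
    have hm : m (k + 1) = W ++ m (k - 1) := hmr k hk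
    have hWc : m k ++ W = W ++ m k := wordPow_comm _ _
    have hWr : r ++ W.reverse = W ++ r := comm_wordPow h4 _
    have hk1 : k + 1 - 1 = k := by omega
    refine ⟨W ++ r, y, x, ?_, ?_, ?_, ?_, ?_⟩
    · rw [hk1, hm, List.append_assoc, h2, List.append_assoc]
    · rw [hk1, hm, ← List.append_assoc, hWc, List.append_assoc, h1, List.append_assoc]
    · rw [List.reverse_append, h3, hWr]
    · rw [hm, List.reverse_append, ← List.append_assoc, List.append_assoc W r,
        h5, ← List.append_assoc, List.append_assoc _ r, hWr, ← List.append_assoc,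
        List.append_assoc W (m (k-1)) W]
    · rw [hk1, List.append_assoc, h4, ← List.append_assoc, ← hWc, List.append_assoc]

/-- Lemma 5.3 (palindrome part): for every `k ≥ 1` and `1 ≤ t ≤ s_{k+1}`, the
word `(m_k^t m_{k-1})'` (with its last two letters removed) is a palindrome. -/
theorem stmt10 {A : Type*} (a b : A) (hab : a ≠ b) (s : ℕ → ℕ) (hs : ∀ k, 1 ≤ s k)
    (m : ℕ → List A) (hm0 : m 0 = [b])
    (hm1 : m 1 = List.replicate (s 1 - 1) b ++ [a])
    (hmr : ∀ k : ℕ, 1 ≤ k → m (k + 1) = wordPow (m k) (s (k + 1)) ++ m (k - 1)) :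
    ∀ k : ℕ, 1 ≤ k → ∀ t : ℕ, 1 ≤ t → t ≤ s (k + 1) →
      (drop2 (wordPow (m k) t ++ m (k - 1))).reverse =
        drop2 (wordPow (m k) t ++ m (k - 1)) := by
  intro k hk t ht _
  obtain ⟨r, x, y, h1, _, h3, h4, _⟩ := key_inv a b s m hm0 hm1 hmr k hk
  obtain ⟨n, rfl⟩ : ∃ n, t = n + 1 := ⟨t - 1, by omega⟩
  have : wordPow (m k) (n + 1) ++ m (k - 1) = (wordPow (m k) n ++ r) ++ [x, y] := by
    rw [wordPow_succ', List.append_assoc, h1, List.append_assoc]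
  rw [this, drop2_concat2, List.reverse_append, h3, comm_wordPow h4]
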